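/- If f : ℝⁿ → ℝ attains a local maximum at x* and f has an upper exhauster E* at x* in the sense of Dini, then for every g ∈ ℝⁿ there exists C ∈ E* with ⟨v, g⟩ ≥ 0 for all v ∈ C. -/

import Mathlib

open Filter Topology Set

/-- if `f` attains a local maximum at `x*` and has an upper exhauster (in the
sense of Dini) at `x*`, then for every direction `g` there is a set `C` of the exhauster all
of whose elements have nonnegative inner product with `g`. -/
theorem local_max_upper_exhauster {n : ℕ} (f : EuclideanSpace ℝ (Fin n) → ℝ)
    (xs : EuclideanSpace ℝ (Fin n)) (φ : EuclideanSpace ℝ (Fin n) → ℝ)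
    (Estar : Set (Set (EuclideanSpace ℝ (Fin n))))
    (hmax : IsLocalMax f xs)
    (hD : ∀ g : EuclideanSpace ℝ (Fin n),
      Tendsto (fun α : ℝ => (f (xs + α • g) - f xs) / α) (𝓝[>] (0:ℝ)) (𝓝 (φ g)))
    (hne : Estar.Nonempty)
    (hsets : ∀ C ∈ Estar, C.Nonempty ∧ Convex ℝ C ∧ IsCompact C)
    (hrep : ∀ g : EuclideanSpace ℝ (Fin n),
      IsLeast ((fun C => sSup ((fun v => (inner ℝ v g : ℝ)) '' C)) '' Estar) (φ g)) :
    ∀ g : EuclideanSpace ℝ (Fin n), ∃ C ∈ Estar, ∀ v ∈ C, 0 ≤ (inner ℝ v g : ℝ) := by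
  intro g
  -- Step 1: φ(-g) ≤ 0.
  have hφ : φ (-g) ≤ 0 := by
    refine le_of_tendsto (hD (-g)) ?_
    have hcont : Tendsto (fun α : ℝ => xs + α • (-g)) (𝓝[>] (0:ℝ)) (𝓝 xs) := by
      have : Tendsto (fun α : ℝ => xs + α • (-g)) (𝓝 (0:ℝ)) (𝓝 (xs + (0:ℝ) • (-g))) := by
        exact (tendsto_const_nhds.add ((continuous_id.smul continuous_const).tendsto 0))
      simpa using this.mono_left nhdsWithin_le_nhds
    have hev : ∀ᶠ α in 𝓝[>] (0:ℝ), f (xs + α • (-g)) ≤ f xs :=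
      hcont.eventually hmax
    filter_upwards [hev, self_mem_nhdsWithin] with α hα hαpos
    exact div_nonpos_of_nonpos_of_nonneg (by linarith) (le_of_lt hαpos)
  -- Step 2: φ(-g) is attained as the sup over some C ∈ Estar.
  obtain ⟨C, hC, hCφ⟩ := (hrep (-g)).1
  refine ⟨C, hC, fun v hv => ?_⟩
  have hbdd : BddAbove ((fun v => (inner ℝ v (-g) : ℝ)) '' C) := by
    have hcomp : IsCompact ((fun v => (inner ℝ v (-g) : ℝ)) '' C) :=
      ((hsets C hC).2.2).image (Continuous.inner continuous_id continuous_const)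
    exact hcomp.bddAbove
  have hle : (inner ℝ v (-g) : ℝ) ≤ φ (-g) := by
    rw [← hCφ]
    exact le_csSup hbdd ⟨v, hv, rfl⟩
  have : (inner ℝ v (-g) : ℝ) = -(inner ℝ v g : ℝ) := by simp
  linarith [this ▸ hle]
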